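/- arXiv:1405.4190 — 4 statements merged into one kernel-verified Lean document; each statement's English description precedes it below -/
import Mathlib

section
/- Let G = (V, E) be a finite undirected connected graph with N vertices, maximum degree deg(G), and diameter diam(G), and let (M, d) be a metric space. Then for every configuration x ∈ M^V, σ²(x) ≤ (N−1)·deg(G)·diam(G)·Δ(x), where Δ and σ² are the disagreement and variance functions. -/
open Finset

private lemma list_sq_sum_le (l : List ℝ) :
    l.sum ^ 2 ≤ (l.length : ℝ) * (l.map (· ^ 2)).sum := by
  have h1 : l.sum = ∑ i : Fin l.length, l.get i := by
    conv_lhs => rw [← List.ofFn_get l]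
    rw [List.sum_ofFn]
  have h2 : (l.map (· ^ 2)).sum = ∑ i : Fin l.length, l.get i ^ 2 := by
    conv_lhs => rw [← List.ofFn_get l, List.map_ofFn]
    rw [List.sum_ofFn]
    rfl
  rw [h1, h2]
  have := sq_sum_le_card_mul_sum_sq (s := (Finset.univ : Finset (Fin l.length)))
    (f := fun i => l.get i)
  simpa using this

private lemma walk_dist_le {V : Type*} {M : Type*} [MetricSpace M] {G : SimpleGraph V}
    (x : V → M) : ∀ {u v : V} (p : G.Walk u v),
    dist (x u) (x v) ≤ (p.darts.map fun d => dist (x d.toProd.1) (x d.toProd.2)).sum := by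
  intro u v p
  induction p with
  | nil => simp
  | cons h q ih =>
    simp only [SimpleGraph.Walk.darts_cons, List.map_cons, List.sum_cons]
    calc dist (x _) (x _) ≤ dist (x _) (x _) + dist (x _) (x _) := dist_triangle _ _ _
      _ ≤ _ := by exact add_le_add (le_refl _) ih

/-- `σ²(x) ≤ (N-1)·deg(G)·diam(G)·Δ(x)` for any configuration `x` of points of a metric
space indexed by the vertices of a finite connected graph `G`. Sums over unordered pairs
are written as halves of sums over ordered pairs. -/
theorem stmt_6 {V : Type*} [Fintype V] [DecidableEq V] (G : SimpleGraph V)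
    [DecidableRel G.Adj] (hG : G.Connected) (hN : 2 ≤ Fintype.card V)
    {M : Type*} [MetricSpace M] (x : V → M) :
    (Fintype.card V : ℝ)⁻¹ *
        ((1 / 2 : ℝ) * ∑ v : V, ∑ w : V, if v ≠ w then dist (x v) (x w) ^ 2 else 0)
      ≤ ((Fintype.card V : ℝ) - 1) * (G.maxDegree : ℝ) * (G.diam : ℝ) *
        ((1 / 2 : ℝ) * ∑ v : V, ∑ w : V,
          (if G.Adj v w then ((G.degree v : ℝ)⁻¹ + (G.degree w : ℝ)⁻¹) * dist (x v) (x w) ^ 2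
            else 0)) := by
  classical
  have hne : Nonempty V := Fintype.card_pos_iff.mp (by omega)
  set N : ℝ := (Fintype.card V : ℝ) with hNdef
  have hN2 : (2 : ℝ) ≤ N := by rw [hNdef]; exact_mod_cast hN
  have hN0 : (0 : ℝ) < N := by linarith
  -- the sum over ordered adjacent pairs of squared distances
  set S2 : ℝ := ∑ v : V, ∑ w : V, if G.Adj v w then dist (x v) (x w) ^ 2 else 0 with hS2def
  have hS2nonneg : 0 ≤ S2 := by
    apply Finset.sum_nonneg; intro v _; apply Finset.sum_nonneg; intro w _
    split <;> positivity
  -- express S2 as a sum over a filter on pairs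
  set A : Finset (V × V) := (Finset.univ ×ˢ Finset.univ).filter (fun q => G.Adj q.1 q.2) with hAdef
  have hS2A : S2 = ∑ q ∈ A, dist (x q.1) (x q.2) ^ 2 := by
    rw [hAdef, Finset.sum_filter, Finset.sum_product]
  have hediam : G.ediam ≠ ⊤ := by
    obtain ⟨u, v, huv⟩ := SimpleGraph.exists_edist_eq_ediam_of_finite (G := G)
    rw [← huv]
    exact SimpleGraph.edist_ne_top_iff_reachable.mpr (hG.preconnected u v)
  have hdiam0 : (0 : ℝ) ≤ (G.diam : ℝ) := by positivity
  -- key pointwise bound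
  have key : ∀ v w : V, dist (x v) (x w) ^ 2 ≤ (G.diam : ℝ) * S2 := by
    intro v w
    by_cases hvw : v = w
    · subst hvw; simp; positivity
    · obtain ⟨p, hpath, hplen⟩ := hG.exists_path_of_dist v w
      set l : List ℝ := p.darts.map fun d => dist (x d.toProd.1) (x d.toProd.2) with hldef
      have h1 : dist (x v) (x w) ≤ l.sum := walk_dist_le x p
      have hlsum : 0 ≤ l.sum := by
        apply List.sum_nonneg; intro a ha
        simp only [hldef, List.mem_map] at ha
        obtain ⟨d, _, rfl⟩ := ha; positivity
      have h2 : dist (x v) (x w) ^ 2 ≤ l.sum ^ 2 := by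
        apply pow_le_pow_left₀ dist_nonneg h1 2
      have h3 : l.sum ^ 2 ≤ (l.length : ℝ) * (l.map (· ^ 2)).sum := list_sq_sum_le l
      -- the sum of squares along the path is at most S2
      have hnodup : p.darts.Nodup :=
        SimpleGraph.Walk.darts_nodup_of_support_nodup hpath.support_nodup
      have hLnodup : (p.darts.map SimpleGraph.Dart.toProd).Nodup :=
        hnodup.map SimpleGraph.Dart.toProd_injective
      have h4 : (l.map (· ^ 2)).sum ≤ S2 := by
        have heq : (l.map (· ^ 2)).sum
            = ∑ q ∈ (p.darts.map SimpleGraph.Dart.toProd).toFinset,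
              dist (x q.1) (x q.2) ^ 2 := by
          rw [List.sum_toFinset _ hLnodup, List.map_map, List.map_map]
          rfl
        rw [heq, hS2A]
        apply Finset.sum_le_sum_of_subset_of_nonneg
        · intro q hq
          simp only [List.mem_toFinset, List.mem_map] at hq
          obtain ⟨d, hd, rfl⟩ := hq
          simp only [hAdef, Finset.mem_filter, Finset.mem_product, Finset.mem_univ,
            true_and, and_true]
          exact d.adj
        · intro q _ _; positivity
      have hlen : (l.length : ℝ) ≤ (G.diam : ℝ) := by
        have : l.length = p.length := by simp [hldef]
        rw [this, hplen]
        exact_mod_cast SimpleGraph.dist_le_diam hediam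
      have hsqnn : 0 ≤ (l.map (· ^ 2)).sum := by
        apply List.sum_nonneg; intro a ha
        simp only [List.mem_map] at ha
        obtain ⟨d, _, rfl⟩ := ha; positivity
      calc dist (x v) (x w) ^ 2 ≤ (l.length : ℝ) * (l.map (· ^ 2)).sum := h2.trans h3
        _ ≤ (G.diam : ℝ) * S2 := mul_le_mul hlen h4 hsqnn hdiam0
  -- bound on the full non-adjacent sum
  set T : ℝ := ∑ v : V, ∑ w : V, if v ≠ w then dist (x v) (x w) ^ 2 else 0 with hTdef
  have hT : T ≤ N * N * ((G.diam : ℝ) * S2) := by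
    calc T ≤ ∑ v : V, ∑ w : V, (G.diam : ℝ) * S2 := by
          apply Finset.sum_le_sum; intro v _; apply Finset.sum_le_sum; intro w _
          split
          · exact key v w
          · positivity
      _ = N * N * ((G.diam : ℝ) * S2) := by
          simp [Finset.sum_const, hNdef]; ring
  -- the disagreement half-sum
  set H : ℝ := (1 / 2 : ℝ) * ∑ v : V, ∑ w : V,
      (if G.Adj v w then ((G.degree v : ℝ)⁻¹ + (G.degree w : ℝ)⁻¹) * dist (x v) (x w) ^ 2
        else 0) with hHdef
  set mx : ℝ := (G.maxDegree : ℝ) with hmxdef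
  have hmx0 : 0 ≤ mx := by positivity
  have hHnonneg : 0 ≤ H := by
    rw [hHdef]
    apply mul_nonneg (by norm_num)
    apply Finset.sum_nonneg; intro v _; apply Finset.sum_nonneg; intro w _
    split
    · rename_i h
      have h1 : 0 < G.degree v := by
        rw [G.degree_pos_iff_exists_adj]; exact ⟨w, h⟩
      have h2 : 0 < G.degree w := by
        rw [G.degree_pos_iff_exists_adj]; exact ⟨v, h.symm⟩
      positivity
    · exact le_refl 0
  -- S2 ≤ mx * H
  have hS2H : S2 ≤ mx * H := by
    have hpoint : ∀ v w : V, (if G.Adj v w then dist (x v) (x w) ^ 2 else 0)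
        ≤ mx * ((1 / 2 : ℝ) *
          (if G.Adj v w then ((G.degree v : ℝ)⁻¹ + (G.degree w : ℝ)⁻¹) * dist (x v) (x w) ^ 2
            else 0)) := by
      intro v w
      split
      · rename_i h
        have hdv : 0 < G.degree v := by rw [G.degree_pos_iff_exists_adj]; exact ⟨w, h⟩
        have hdw : 0 < G.degree w := by rw [G.degree_pos_iff_exists_adj]; exact ⟨v, h.symm⟩
        have hmxpos : 0 < mx := by
          have := G.degree_le_maxDegree v
          rw [hmxdef]
          exact_mod_cast lt_of_lt_of_le hdv this
        have hv : (mx)⁻¹ ≤ (G.degree v : ℝ)⁻¹ := by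
          apply inv_anti₀ (by exact_mod_cast hdv)
          rw [hmxdef]; exact_mod_cast G.degree_le_maxDegree v
        have hw' : (mx)⁻¹ ≤ (G.degree w : ℝ)⁻¹ := by
          apply inv_anti₀ (by exact_mod_cast hdw)
          rw [hmxdef]; exact_mod_cast G.degree_le_maxDegree w
        have hd2 : (0:ℝ) ≤ dist (x v) (x w) ^ 2 := by positivity
        have : (2:ℝ) * mx⁻¹ ≤ (G.degree v : ℝ)⁻¹ + (G.degree w : ℝ)⁻¹ := by linarith
        have h2 : (2:ℝ) * mx⁻¹ * dist (x v) (x w) ^ 2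
            ≤ ((G.degree v : ℝ)⁻¹ + (G.degree w : ℝ)⁻¹) * dist (x v) (x w) ^ 2 :=
          mul_le_mul_of_nonneg_right this hd2
        have h3 : mx * ((1 / 2 : ℝ) * ((2:ℝ) * mx⁻¹ * dist (x v) (x w) ^ 2))
            = dist (x v) (x w) ^ 2 := by
          field_simp
        calc dist (x v) (x w) ^ 2
            = mx * ((1 / 2 : ℝ) * ((2:ℝ) * mx⁻¹ * dist (x v) (x w) ^ 2)) := h3.symm
          _ ≤ mx * ((1 / 2 : ℝ) *
              (((G.degree v : ℝ)⁻¹ + (G.degree w : ℝ)⁻¹) * dist (x v) (x w) ^ 2)) := by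
            apply mul_le_mul_of_nonneg_left _ hmxpos.le
            apply mul_le_mul_of_nonneg_left h2 (by norm_num)
      · simp
    calc S2 ≤ ∑ v : V, ∑ w : V, mx * ((1 / 2 : ℝ) *
          (if G.Adj v w then ((G.degree v : ℝ)⁻¹ + (G.degree w : ℝ)⁻¹) * dist (x v) (x w) ^ 2
            else 0)) := by
          rw [hS2def]
          apply Finset.sum_le_sum; intro v _; apply Finset.sum_le_sum; intro w _
          exact hpoint v w
      _ = mx * H := by
          rw [hHdef, ← mul_assoc, Finset.mul_sum]
          refine Finset.sum_congr rfl fun v _ => ?_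
          rw [Finset.mul_sum]
          exact Finset.sum_congr rfl fun w _ => by ring
  -- finish
  show N⁻¹ * ((1 / 2 : ℝ) * T) ≤ (N - 1) * mx * (G.diam : ℝ) * H
  have step1 : N⁻¹ * ((1 / 2 : ℝ) * T) ≤ N⁻¹ * ((1 / 2 : ℝ) * (N * N * ((G.diam : ℝ) * S2))) := by
    apply mul_le_mul_of_nonneg_left _ (by positivity)
    exact mul_le_mul_of_nonneg_left hT (by norm_num)
  have step2 : N⁻¹ * ((1 / 2 : ℝ) * (N * N * ((G.diam : ℝ) * S2)))
      = (N / 2) * ((G.diam : ℝ) * S2) := by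
    field_simp
  have step3 : (N / 2) * ((G.diam : ℝ) * S2) ≤ (N - 1) * ((G.diam : ℝ) * S2) := by
    apply mul_le_mul_of_nonneg_right _ (by positivity)
    linarith
  have step4 : (N - 1) * ((G.diam : ℝ) * S2) ≤ (N - 1) * ((G.diam : ℝ) * (mx * H)) := by
    apply mul_le_mul_of_nonneg_left _ (by linarith)
    exact mul_le_mul_of_nonneg_left hS2H hdiam0
  calc N⁻¹ * ((1 / 2 : ℝ) * T)
      ≤ (N / 2) * ((G.diam : ℝ) * S2) := step2 ▸ step1
    _ ≤ (N - 1) * ((G.diam : ℝ) * S2) := step3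
    _ ≤ (N - 1) * ((G.diam : ℝ) * (mx * H)) := step4
    _ = (N - 1) * mx * (G.diam : ℝ) * H := by ring
end

section
/- Law of cosines on the unit sphere: for a spherical triangle with vertices p, q, r in S² (with pairwise distances less than π) and angle α at vertex r, cos(d(p,q)) = cos(d(p,r))·cos(d(q,r)) + sin(d(p,r))·sin(d(q,r))·cos(α). -/
open RealInnerProductSpace

/-- Spherical law of cosines on the unit sphere `S² ⊂ ℝ³`, with geodesic distance
`d(a,b) = arccos ⟪a,b⟫` and the angle at `r` computed between the initial tangent
vectors of the geodesics `[r,p]` and `[r,q]`. -/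
theorem stmt_9 (p q r : EuclideanSpace ℝ (Fin 3))
    (hp : ‖p‖ = 1) (hq : ‖q‖ = 1) (hr : ‖r‖ = 1)
    (hrp : p - ⟪p, r⟫ • r ≠ 0) (hrq : q - ⟪q, r⟫ • r ≠ 0)
    (α : ℝ) (hα : α = InnerProductGeometry.angle (p - ⟪p, r⟫ • r) (q - ⟪q, r⟫ • r)) :
    Real.cos (Real.arccos ⟪p, q⟫) =
      Real.cos (Real.arccos ⟪p, r⟫) * Real.cos (Real.arccos ⟪q, r⟫) +
        Real.sin (Real.arccos ⟪p, r⟫) * Real.sin (Real.arccos ⟪q, r⟫) * Real.cos α := by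
  have hcs : ∀ x y : EuclideanSpace ℝ (Fin 3), ‖x‖ = 1 → ‖y‖ = 1 →
      -1 ≤ ⟪x, y⟫ ∧ ⟪x, y⟫ ≤ 1 := by
    intro x y hx hy
    have := abs_real_inner_le_norm x y
    rw [hx, hy] at this
    constructor <;> nlinarith [abs_le.mp this]
  obtain ⟨h1, h2⟩ := hcs p q hp hq
  obtain ⟨h3, h4⟩ := hcs p r hp hr
  obtain ⟨h5, h6⟩ := hcs q r hq hr
  rw [Real.cos_arccos h1 h2, Real.cos_arccos h3 h4, Real.cos_arccos h5 h6,
    Real.sin_arccos, Real.sin_arccos]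
  set a : ℝ := ⟪p, r⟫ with ha
  set b : ℝ := ⟪q, r⟫ with hb
  set c : ℝ := ⟪p, q⟫ with hc
  have hra : ⟪r, p⟫ = a := by rw [ha]; exact real_inner_comm p r
  have hrb : ⟪r, q⟫ = b := by rw [hb]; exact real_inner_comm q r
  have hnp : ‖p - a • r‖ ^ 2 = 1 - a ^ 2 := by
    rw [← real_inner_self_eq_norm_sq]
    simp only [inner_sub_left, inner_sub_right, real_inner_smul_left, real_inner_smul_right,
      real_inner_self_eq_norm_sq, hp, hr, hra, norm_smul, Real.norm_eq_abs, mul_one, sq_abs]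
    ring
  have hnq : ‖q - b • r‖ ^ 2 = 1 - b ^ 2 := by
    rw [← real_inner_self_eq_norm_sq]
    simp only [inner_sub_left, inner_sub_right, real_inner_smul_left, real_inner_smul_right,
      real_inner_self_eq_norm_sq, hq, hr, hrb, norm_smul, Real.norm_eq_abs, mul_one, sq_abs]
    ring
  have hnp' : Real.sqrt (1 - a ^ 2) = ‖p - a • r‖ := by
    rw [← hnp, Real.sqrt_sq (norm_nonneg _)]
  have hnq' : Real.sqrt (1 - b ^ 2) = ‖q - b • r‖ := by
    rw [← hnq, Real.sqrt_sq (norm_nonneg _)]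
  have hip : ⟪p - a • r, q - b • r⟫ = c - a * b := by
    simp only [inner_sub_left, inner_sub_right, real_inner_smul_left, real_inner_smul_right,
      real_inner_self_eq_norm_sq, hr, hra, hrb, ← ha, ← hb, ← hc]
    ring
  rw [hα, InnerProductGeometry.cos_angle, hip, hnp', hnq']
  have hp0 : ‖p - a • r‖ ≠ 0 := norm_ne_zero_iff.mpr hrp
  have hq0 : ‖q - b • r‖ ≠ 0 := norm_ne_zero_iff.mpr hrq
  field_simp
  ring
end

section
/- In a CAT(κ) metric space with κ > 0, for a geodesic triangle with vertices p, q, r such that max{d(m,r), d(p,q)} < π/(2√κ) where m is the midpoint of [p,q], the midpoint convexity inequality χ_κ(d(m,r)) ≤ (χ_κ(d(p,r)) + χ_κ(d(q,r)))/2 holds, where χ_κ(t) = 1 − cos(√κ t). -/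
lemma cos_tri_bounds (u v w : ℝ) (hw : 0 ≤ w)
    (h1 : w ≤ u + v) (h2 : u ≤ v + w) (h3 : v ≤ u + w)
    (hper : u + v + w < 2 * Real.pi) :
    Real.cos (u + v) ≤ Real.cos w ∧ Real.cos w ≤ Real.cos (u - v) := by
  constructor
  · by_cases h : u + v ≤ Real.pi
    · exact Real.cos_le_cos_of_nonneg_of_le_pi hw h h1
    · push_neg at h
      rw [show u + v = 2 * Real.pi - (2 * Real.pi - (u + v)) by ring,
        Real.cos_two_pi_sub]
      exact Real.cos_le_cos_of_nonneg_of_le_pi hw (by linarith) (by linarith)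
  · rw [← Real.cos_abs (u - v)]
    by_cases h : w ≤ Real.pi
    · exact Real.cos_le_cos_of_nonneg_of_le_pi (abs_nonneg _) h
        (abs_le.mpr ⟨by linarith, by linarith⟩)
    · push_neg at h
      rw [show w = 2 * Real.pi - (2 * Real.pi - w) by ring, Real.cos_two_pi_sub]
      exact Real.cos_le_cos_of_nonneg_of_le_pi (abs_nonneg _) (by linarith)
        (abs_le.mpr ⟨by linarith, by linarith⟩)


/-- `c` is a geodesic (parametrized by arclength on `[0, dist x y]`) from `x` to `y`. -/
def IsGeodesicSeg {M : Type*} [MetricSpace M] (c : ℝ → M) (x y : M) : Prop :=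
  c 0 = x ∧ c (dist x y) = y ∧
    ∀ s ∈ Set.Icc (0 : ℝ) (dist x y), ∀ t ∈ Set.Icc (0 : ℝ) (dist x y),
      dist (c s) (c t) = |s - t|

/-- `M` is a CAT(κ) space (`κ > 0`): every geodesic triangle of perimeter `< 2π/√κ`
is at least as thin as its comparison triangle in the model sphere of curvature `κ`.
The comparison distance `d'` from the third vertex `r` to the point at arclength `t`
along the side `[p,q]` is encoded through the spherical law of cosines: `cosA` is the
cosine of the comparison angle at `p`, and `d'` satisfies the corresponding spherical
relation. -/
def IsCATK (κ : ℝ) (M : Type*) [MetricSpace M] : Prop :=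
  ∀ (p q r : M) (c : ℝ → M), IsGeodesicSeg c p q →
    dist p q + dist q r + dist r p < 2 * Real.pi / Real.sqrt κ →
    ∀ t ∈ Set.Icc (0 : ℝ) (dist p q), ∀ cosA d' : ℝ,
      0 ≤ d' → d' ≤ Real.pi / Real.sqrt κ →
      Real.cos (Real.sqrt κ * dist q r) =
          Real.cos (Real.sqrt κ * dist p q) * Real.cos (Real.sqrt κ * dist p r) +
            Real.sin (Real.sqrt κ * dist p q) * Real.sin (Real.sqrt κ * dist p r) * cosA →
      Real.cos (Real.sqrt κ * d') =
          Real.cos (Real.sqrt κ * t) * Real.cos (Real.sqrt κ * dist p r) +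
            Real.sin (Real.sqrt κ * t) * Real.sin (Real.sqrt κ * dist p r) * cosA →
      dist (c t) r ≤ d'


/-- Midpoint convexity of `χ_κ(t) = 1 - cos(√κ t)` in a CAT(κ) space with `κ > 0`:
if `m` is the midpoint of `[p,q]` and `max {d(m,r), d(p,q)} < π/(2√κ)`, then
`χ_κ(d(m,r)) ≤ (χ_κ(d(p,r)) + χ_κ(d(q,r))) / 2`. -/
theorem stmt_12 {M : Type*} [MetricSpace M] (κ : ℝ) (hκ : 0 < κ) (hM : IsCATK κ M)
    (p q r m : M) (c : ℝ → M) (hc : IsGeodesicSeg c p q)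
    (hm : m = c (dist p q / 2))
    (hper : dist p q + dist q r + dist r p < 2 * Real.pi / Real.sqrt κ)
    (hmr : dist m r < Real.pi / (2 * Real.sqrt κ))
    (hpq : dist p q < Real.pi / (2 * Real.sqrt κ)) :
    1 - Real.cos (Real.sqrt κ * dist m r) ≤
      ((1 - Real.cos (Real.sqrt κ * dist p r)) + (1 - Real.cos (Real.sqrt κ * dist q r))) / 2 := by
  have hs : 0 < Real.sqrt κ := Real.sqrt_pos.mpr hκ
  set s : ℝ := Real.sqrt κ with hs_def
  have hpi := Real.pi_pos
  set a : ℝ := dist p q with ha_def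
  set b : ℝ := dist p r with hb_def
  set e : ℝ := dist q r with he_def
  have ha0 : 0 ≤ a := dist_nonneg
  have hb0 : 0 ≤ b := dist_nonneg
  have he0 : 0 ≤ e := dist_nonneg
  -- triangle inequalities
  have t1 : e ≤ a + b := by rw [ha_def, hb_def, he_def, dist_comm p q]; exact dist_triangle q p r
  have t2 : a ≤ b + e := by rw [ha_def, hb_def, he_def, dist_comm q r]; exact dist_triangle p r q
  have t3 : b ≤ a + e := by rw [ha_def, hb_def, he_def]; exact dist_triangle p q r
  -- perimeter in scaled form
  have hper' : s * a + s * b + s * e < 2 * Real.pi := by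
    have : a + e + b < 2 * Real.pi / s := by
      rw [ha_def, he_def, hb_def, dist_comm p r]; linarith [hper]
    calc s * a + s * b + s * e = s * (a + e + b) := by ring
      _ < s * (2 * Real.pi / s) := by exact mul_lt_mul_of_pos_left this hs
      _ = 2 * Real.pi := by field_simp
  have hsa : s * a < Real.pi / 2 := by
    have := (mul_lt_mul_of_pos_left hpq hs)
    calc s * a < s * (Real.pi / (2 * s)) := this
      _ = Real.pi / 2 := by field_simp
  have hsmr : s * dist m r < Real.pi / 2 := by
    have := (mul_lt_mul_of_pos_left hmr hs)
    calc s * dist m r < s * (Real.pi / (2 * s)) := this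
      _ = Real.pi / 2 := by field_simp
  have hCmr0 : 0 ≤ Real.cos (s * dist m r) := by
    apply Real.cos_nonneg_of_mem_Icc
    constructor
    · have : 0 ≤ s * dist m r := mul_nonneg hs.le dist_nonneg
      linarith
    · linarith
  -- degenerate case a = 0
  rcases eq_or_lt_of_le ha0 with ha | ha
  · have hpq0 : p = q := by rw [← dist_le_zero, ← ha_def, ← ha]
    have hmp : m = p := by rw [hm, ← ha, ]; simpa using hc.1
    subst hpq0; rw [hmp]
    have : b = e := by rw [hb_def, he_def]
    rw [show dist p r = b from rfl, ← this]
    ring_nf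
    linarith
  -- degenerate case b = 0
  rcases eq_or_lt_of_le hb0 with hb | hb
  · have hpr : p = r := by rw [← dist_le_zero, ← hb_def, ← hb]
    have hdm : dist m r = a / 2 := by
      have h := hc.2.2 (a / 2) ⟨by linarith, by linarith⟩ 0 ⟨le_refl 0, ha0⟩
      rw [hc.1] at h
      rw [hm, ← hpr, h, sub_zero, abs_of_nonneg (by linarith)]
    have heq : e = a := by rw [he_def, ← hpr, dist_comm, ha_def]
    rw [hdm, ← hb, heq, mul_zero, Real.cos_zero]
    have hhalf : s * a = 2 * (s * (a / 2)) := by ring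
    rw [hhalf, Real.cos_two_mul]
    have hc1 : Real.cos (s * (a / 2)) ≤ 1 := Real.cos_le_one _
    have hc0 : 0 ≤ Real.cos (s * (a / 2)) := by
      apply Real.cos_nonneg_of_mem_Icc
      have hq : s * (a / 2) = s * a / 2 := by ring
      constructor
      · have : 0 ≤ s * (a / 2) := mul_nonneg hs.le (by linarith)
        linarith
      · rw [hq]; linarith
    nlinarith [hc1, hc0]
  -- main case: a > 0, b > 0
  set u : ℝ := s * a with hu_def
  set v : ℝ := s * b with hv_def
  set w : ℝ := s * e with hw_def
  have hu0 : 0 < u := mul_pos hs ha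
  have hv0 : 0 < v := mul_pos hs hb
  have hw0 : 0 ≤ w := mul_nonneg hs.le he0
  have hT1 : w ≤ u + v := by
    have := mul_le_mul_of_nonneg_left t1 hs.le
    rw [hu_def, hv_def, hw_def]; linarith [mul_add s a b ▸ this]
  have hT2 : u ≤ v + w := by
    have := mul_le_mul_of_nonneg_left t2 hs.le
    rw [hu_def, hv_def, hw_def]; linarith [mul_add s b e ▸ this]
  have hT3 : v ≤ u + w := by
    have := mul_le_mul_of_nonneg_left t3 hs.le
    rw [hu_def, hv_def, hw_def]; linarith [mul_add s a e ▸ this]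
  have hvpi : v < Real.pi := by linarith
  have hsinu : 0 < Real.sin u := Real.sin_pos_of_pos_of_lt_pi hu0 (by linarith)
  have hsinv : 0 < Real.sin v := Real.sin_pos_of_pos_of_lt_pi hv0 hvpi
  obtain ⟨hlow, hhigh⟩ := cos_tri_bounds u v w hw0 hT1 hT2 hT3 hper'
  rw [Real.cos_add] at hlow
  rw [Real.cos_sub] at hhigh
  set cosA : ℝ := (Real.cos w - Real.cos u * Real.cos v) / (Real.sin u * Real.sin v) with hA_def
  have hsuv : 0 < Real.sin u * Real.sin v := mul_pos hsinu hsinv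
  have hA1 : cosA ≤ 1 := by
    rw [hA_def, div_le_one hsuv]; linarith
  have hA2 : -1 ≤ cosA := by
    rw [hA_def, le_div_iff₀ hsuv]; linarith
  have heq1 : Real.cos w = Real.cos u * Real.cos v + Real.sin u * Real.sin v * cosA := by
    rw [hA_def]; field_simp; ring
  -- half-angle quantities
  have hu2a : 0 ≤ u / 2 := by linarith
  have hu2b : u / 2 < Real.pi / 2 := by linarith
  have hc2pos : 0 < Real.cos (u / 2) := Real.cos_pos_of_mem_Ioo ⟨by linarith, hu2b⟩
  have hc2le : Real.cos (u / 2) ≤ 1 := Real.cos_le_one _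
  have hs2pos : 0 ≤ Real.sin (u / 2) := Real.sin_nonneg_of_nonneg_of_le_pi hu2a (by linarith)
  set X : ℝ := Real.cos (u / 2) * Real.cos v + Real.sin (u / 2) * Real.sin v * cosA with hX_def
  have hX1 : X ≤ 1 := by
    have h1 : X ≤ Real.cos (u / 2) * Real.cos v + Real.sin (u / 2) * Real.sin v := by
      rw [hX_def]
      have : Real.sin (u / 2) * Real.sin v * cosA ≤ Real.sin (u / 2) * Real.sin v * 1 := by
        apply mul_le_mul_of_nonneg_left hA1 (mul_nonneg hs2pos hsinv.le)
      linarith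
    calc X ≤ Real.cos (u / 2) * Real.cos v + Real.sin (u / 2) * Real.sin v := h1
      _ = Real.cos (u / 2 - v) := (Real.cos_sub _ _).symm
      _ ≤ 1 := Real.cos_le_one _
  have hX2 : -1 ≤ X := by
    have h1 : Real.cos (u / 2) * Real.cos v - Real.sin (u / 2) * Real.sin v ≤ X := by
      rw [hX_def]
      have : Real.sin (u / 2) * Real.sin v * (-1) ≤ Real.sin (u / 2) * Real.sin v * cosA := by
        apply mul_le_mul_of_nonneg_left hA2 (mul_nonneg hs2pos hsinv.le)
      linarith
    calc (-1 : ℝ) ≤ Real.cos (u / 2 + v) := Real.neg_one_le_cos _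
      _ = Real.cos (u / 2) * Real.cos v - Real.sin (u / 2) * Real.sin v := Real.cos_add _ _
      _ ≤ X := h1
  set d' : ℝ := Real.arccos X / s with hd_def
  have hsd' : s * d' = Real.arccos X := by rw [hd_def]; field_simp
  have hcosd' : Real.cos (s * d') = X := by rw [hsd', Real.cos_arccos hX2 hX1]
  have hd'0 : 0 ≤ d' := div_nonneg (Real.arccos_nonneg X) hs.le
  have hd'pi : d' ≤ Real.pi / s := by
    rw [hd_def]
    exact div_le_div_of_nonneg_right (Real.arccos_le_pi X) hs.le
  have hmid : a / 2 ∈ Set.Icc (0 : ℝ) a := ⟨by linarith, by linarith⟩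
  have heq2 : Real.cos (s * d') =
      Real.cos (s * (a / 2)) * Real.cos (s * b) +
        Real.sin (s * (a / 2)) * Real.sin (s * b) * cosA := by
    rw [hcosd', hX_def, show s * (a / 2) = u / 2 by rw [hu_def]; ring]
  have key : dist m r ≤ d' := by
    rw [hm]
    exact hM p q r c hc hper (a / 2) hmid cosA d' hd'0 hd'pi heq1 heq2
  -- cos comparison
  have hcos_ge : X ≤ Real.cos (s * dist m r) := by
    rw [← hcosd']
    apply Real.cos_le_cos_of_nonneg_of_le_pi (mul_nonneg hs.le dist_nonneg)
    · rw [hsd']; exact Real.arccos_le_pi X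
    · exact mul_le_mul_of_nonneg_left key hs.le
  -- double angle identities
  have hcu : Real.cos u = 2 * Real.cos (u / 2) ^ 2 - 1 := by
    have h := Real.cos_two_mul (u / 2)
    rw [show 2 * (u / 2) = u by ring] at h
    exact h
  have hsu : Real.sin u = 2 * Real.sin (u / 2) * Real.cos (u / 2) := by
    have h := Real.sin_two_mul (u / 2)
    rw [show 2 * (u / 2) = u by ring] at h
    exact h
  have hrel : Real.cos v + Real.cos w = 2 * Real.cos (u / 2) * X := by
    rw [heq1, hX_def, hcu, hsu]; ring
  -- conclude
  have hgoal : Real.cos v + Real.cos w ≤ 2 * Real.cos (s * dist m r) := by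
    rw [hrel]
    have hkey : Real.cos (u / 2) * X ≤ Real.cos (s * dist m r) := by
      rcases le_or_gt 0 X with hX | hX
      · calc Real.cos (u / 2) * X ≤ 1 * X := mul_le_mul_of_nonneg_right hc2le hX
          _ = X := one_mul X
          _ ≤ Real.cos (s * dist m r) := hcos_ge
      · calc Real.cos (u / 2) * X ≤ 0 :=
            mul_nonpos_of_nonneg_of_nonpos hc2pos.le hX.le
          _ ≤ Real.cos (s * dist m r) := hCmr0
    linarith [hkey]
  linarith
end

section
/- Positive definite matrix midpoint: for M, N real symmetric positive definite n×n matrices, the matrix P = M^{1/2}(M^{-1/2} N M^{-1/2})^{1/2} M^{1/2} is symmetric positive definite and satisfies d(M,P) = d(P,N) = d(M,N)/2 for the affine-invariant distance d(A,B) = ‖log(A^{-1/2} B A^{-1/2})‖_F. -/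
open Matrix Finset

/-- Frobenius norm of a real square matrix. -/
noncomputable def frobNorm {n : Type*} [Fintype n] (A : Matrix n n ℝ) : ℝ :=
  Real.sqrt (∑ i : n, ∑ j : n, (A i j) ^ 2)

open scoped Classical in
/-- The positive semidefinite square root (junk value `0` off positive semidefinite
matrices). -/
noncomputable def matSqrt {n : Type*} [Fintype n] [DecidableEq n] (A : Matrix n n ℝ) :
    Matrix n n ℝ :=
  if h : A.PosSemidef then h.1.cfc Real.sqrt else 0

open scoped Classical in
/-- The matrix logarithm via the functional calculus of a Hermitian matrix (junk value
`0` off Hermitian matrices). -/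
noncomputable def matLog {n : Type*} [Fintype n] [DecidableEq n] (A : Matrix n n ℝ) :
    Matrix n n ℝ :=
  if h : A.IsHermitian then h.cfc Real.log else 0

/-- The affine-invariant distance `d(A,B) = ‖log(A^{-1/2} B A^{-1/2})‖_F` on positive
definite matrices. -/
noncomputable def aiDist {n : Type*} [Fintype n] [DecidableEq n] (A B : Matrix n n ℝ) : ℝ :=
  frobNorm (matLog ((matSqrt A)⁻¹ * B * (matSqrt A)⁻¹))

/- ### Auxiliary lemmas -/

section Aux

set_option linter.unusedSectionVars false

open Polynomial

lemma contOn_finite {s : Set ℝ} (hs : s.Finite) (f : ℝ → ℝ) : ContinuousOn f s := by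
  rw [continuousOn_iff_continuous_restrict]
  have := hs.to_subtype
  exact continuous_of_discreteTopology

lemma frobNorm_eq_trace {n : Type*} [Fintype n] (A : Matrix n n ℝ) :
    frobNorm A = Real.sqrt ((Aᵀ * A).trace) := by
  unfold frobNorm
  congr 1
  rw [Matrix.trace]
  simp only [Matrix.diag_apply, Matrix.mul_apply, Matrix.transpose_apply]
  rw [Finset.sum_comm]
  simp [sq]

lemma frobNorm_two_smul {n : Type*} [Fintype n] (A : Matrix n n ℝ) :
    frobNorm ((2:ℝ) • A) = 2 * frobNorm A := by
  unfold frobNorm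
  have h : ∀ i j, ((2:ℝ) • A) i j ^ 2 = 4 * (A i j)^2 := by
    intro i j; simp [Matrix.smul_apply]; ring
  simp_rw [h, ← Finset.mul_sum]
  rw [Real.sqrt_mul (by norm_num), show Real.sqrt 4 = 2 by
    rw [show (4:ℝ) = 2^2 by norm_num, Real.sqrt_sq (by norm_num)]]

variable {n : Type*} [Fintype n] [DecidableEq n]

noncomputable def Matrix.PosSemidef.sqrt {A : Matrix n n ℝ} (hA : A.PosSemidef) : Matrix n n ℝ :=
  hA.1.cfc Real.sqrt

lemma Matrix.PosSemidef.sqrt_mul_self {A : Matrix n n ℝ} (hA : A.PosSemidef) :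
    hA.sqrt * hA.sqrt = A := by
  unfold Matrix.PosSemidef.sqrt
  rw [← hA.1.cfc_eq, ← cfc_mul Real.sqrt Real.sqrt A]
  conv_rhs => rw [← cfc_id' ℝ A hA.1]
  apply cfc_congr
  intro x hx
  rw [hA.1.spectrum_real_eq_range_eigenvalues] at hx
  obtain ⟨i, rfl⟩ := hx
  exact Real.mul_self_sqrt (hA.eigenvalues_nonneg i)

open scoped MatrixOrder in
lemma Matrix.PosSemidef.posSemidef_sqrt {A : Matrix n n ℝ} (hA : A.PosSemidef) :
    hA.sqrt.PosSemidef := by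
  unfold Matrix.PosSemidef.sqrt
  rw [← hA.1.cfc_eq]
  exact Matrix.nonneg_iff_posSemidef.mp (cfc_nonneg fun x _ => Real.sqrt_nonneg x)

lemma frobNorm_units_conj (L : Matrix n n ℝ) (hL : L.IsHermitian) (u : (Matrix n n ℝ)ˣ)
    (hB : ((u : Matrix n n ℝ) * L * (↑u⁻¹ : Matrix n n ℝ)).IsHermitian) :
    frobNorm ((u : Matrix n n ℝ) * L * (↑u⁻¹ : Matrix n n ℝ)) = frobNorm L := by
  have hLt : Lᵀ = L := hL
  have hBt : ((u : Matrix n n ℝ) * L * (↑u⁻¹ : Matrix n n ℝ))ᵀ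
      = (u : Matrix n n ℝ) * L * (↑u⁻¹ : Matrix n n ℝ) := hB
  rw [frobNorm_eq_trace, frobNorm_eq_trace, hLt, hBt]
  congr 1
  have h2 : ((u : Matrix n n ℝ) * L * (↑u⁻¹ : Matrix n n ℝ))
        * ((u : Matrix n n ℝ) * L * (↑u⁻¹ : Matrix n n ℝ))
      = (u : Matrix n n ℝ) * (L * L) * (↑u⁻¹ : Matrix n n ℝ) := by
    have h1 : (↑u⁻¹ : Matrix n n ℝ) * (↑u : Matrix n n ℝ) = 1 := u.inv_mul
    simp only [Matrix.mul_assoc]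
    rw [← Matrix.mul_assoc (↑u⁻¹ : Matrix n n ℝ) (↑u : Matrix n n ℝ), h1, Matrix.one_mul]
  rw [h2, Matrix.trace_units_conj]

lemma posDef_conj_aux {A : Matrix n n ℝ} (hA : A.PosDef) {B : Matrix n n ℝ}
    (hB : IsUnit B.det) : (Bᴴ * A * B).PosDef := by
  have hinj : Function.Injective B.mulVec :=
    Matrix.mulVec_injective_iff_isUnit.mpr ((Matrix.isUnit_iff_isUnit_det _).mpr hB)
  exact hA.conjTranspose_mul_mul_same hinj

lemma posSemidef_posDef_of_isUnit_det {A : Matrix n n ℝ} (hA : A.PosSemidef)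
    (h : IsUnit A.det) : A.PosDef := by
  exact hA.posDef_iff_isUnit.mpr ((Matrix.isUnit_iff_isUnit_det _).mpr h)

lemma matSqrt_posDef' {A : Matrix n n ℝ} (hA : A.PosDef) :
    hA.posSemidef.sqrt.PosDef := by
  apply posSemidef_posDef_of_isUnit_det hA.posSemidef.posSemidef_sqrt
  have hdet : hA.posSemidef.sqrt.det * hA.posSemidef.sqrt.det = A.det := by
    rw [← Matrix.det_mul, hA.posSemidef.sqrt_mul_self]
  have h2 : IsUnit (hA.posSemidef.sqrt.det * hA.posSemidef.sqrt.det) :=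
    hdet ▸ hA.det_pos.ne'.isUnit
  exact isUnit_of_mul_isUnit_left h2

lemma aeval_units_conj (u : (Matrix n n ℝ)ˣ) (a : Matrix n n ℝ) (q : Polynomial ℝ) :
    aeval ((u : Matrix n n ℝ) * a * (↑u⁻¹ : Matrix n n ℝ)) q
      = (u : Matrix n n ℝ) * aeval a q * (↑u⁻¹ : Matrix n n ℝ) := by
  induction q using Polynomial.induction_on with
  | C r =>
    simp only [aeval_C]
    rw [Algebra.algebraMap_eq_smul_one]
    rw [Matrix.mul_smul, Matrix.smul_mul, Matrix.mul_one, u.mul_inv]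
  | add p q hp hq => simp only [map_add, hp, hq, mul_add, add_mul]
  | monomial k r hk =>
    simp only [_root_.map_mul, aeval_C, map_pow, aeval_X]
    rw [Units.conj_pow]
    simp only [Algebra.algebraMap_eq_smul_one, Matrix.smul_mul, Matrix.one_mul,
      Matrix.mul_smul]

lemma cfc_units_conj (f : ℝ → ℝ) (a : Matrix n n ℝ) (ha : a.IsHermitian)
    (u : (Matrix n n ℝ)ˣ)
    (hb : ((u : Matrix n n ℝ) * a * (↑u⁻¹ : Matrix n n ℝ)).IsHermitian) :
    cfc f ((u : Matrix n n ℝ) * a * (↑u⁻¹ : Matrix n n ℝ))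
      = (u : Matrix n n ℝ) * cfc f a * (↑u⁻¹ : Matrix n n ℝ) := by
  have hspec : spectrum ℝ ((u : Matrix n n ℝ) * a * (↑u⁻¹ : Matrix n n ℝ)) = spectrum ℝ a :=
    spectrum.units_conjugate
  set s := (Matrix.finite_real_spectrum (A := a)).toFinset with hs
  set p := Lagrange.interpolate s id f with hpdef
  have hp : ∀ x ∈ spectrum ℝ a, p.eval x = f x := by
    intro x hx
    have hxs : x ∈ s := (Matrix.finite_real_spectrum (A := a)).mem_toFinset.mpr hx
    simpa [hpdef] using Lagrange.eval_interpolate_at_node f (Set.injOn_id _) hxs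
  have h1 : cfc f a = aeval a p := by
    rw [← cfc_polynomial p a ha]
    exact cfc_congr fun x hx => (hp x hx).symm
  have h2 : cfc f ((u : Matrix n n ℝ) * a * (↑u⁻¹ : Matrix n n ℝ))
      = aeval ((u : Matrix n n ℝ) * a * (↑u⁻¹ : Matrix n n ℝ)) p := by
    rw [← cfc_polynomial p _ hb]
    exact cfc_congr fun x hx => (hp x (hspec ▸ hx)).symm
  rw [h1, h2, aeval_units_conj]

lemma matLog_eq_cfc {A : Matrix n n ℝ} (hA : A.IsHermitian) : matLog A = cfc Real.log A := by
  rw [matLog, dif_pos hA, hA.cfc_eq]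

lemma matSqrt_eq_cfc {A : Matrix n n ℝ} (hA : A.PosSemidef) : matSqrt A = cfc Real.sqrt A := by
  rw [matSqrt, dif_pos hA]
  exact (hA.1.cfc_eq Real.sqrt).symm

lemma spectrum_pos {A : Matrix n n ℝ} (hA : A.PosDef) {x : ℝ} (hx : x ∈ spectrum ℝ A) :
    0 < x := by
  rw [hA.1.spectrum_real_eq_range_eigenvalues] at hx
  obtain ⟨i, rfl⟩ := hx
  exact hA.eigenvalues_pos i

lemma matLog_matSqrt {C : Matrix n n ℝ} (hC : C.PosDef) :
    matLog (matSqrt C) = (2⁻¹ : ℝ) • matLog C := by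
  have hQH : (matSqrt C).IsHermitian := by
    rw [matSqrt, dif_pos hC.posSemidef]; exact hC.posSemidef.posSemidef_sqrt.1
  rw [matLog_eq_cfc hQH, matLog_eq_cfc hC.1, matSqrt_eq_cfc hC.posSemidef]
  have h1 : cfc (Real.log ∘ Real.sqrt) C = cfc Real.log (cfc Real.sqrt C) :=
    cfc_comp Real.log Real.sqrt C hC.1
      (contOn_finite ((Matrix.finite_real_spectrum (A := C)).image _) _)
      (contOn_finite (Matrix.finite_real_spectrum (A := C)) _)
  rw [← h1]
  rw [show (2⁻¹ : ℝ) • cfc Real.log C = cfc (fun x => 2⁻¹ * Real.log x) C from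
    (cfc_const_mul 2⁻¹ Real.log C (contOn_finite (Matrix.finite_real_spectrum (A := C)) _)).symm]
  apply cfc_congr
  intro x hx
  have hxpos := spectrum_pos hC hx
  simp only [Function.comp_apply]
  rw [Real.log_sqrt hxpos.le]
  ring

end Aux

/-- The geodesic midpoint `P = M^{1/2} (M^{-1/2} N M^{-1/2})^{1/2} M^{1/2}` of two
positive definite matrices is positive definite and is the metric midpoint for the
affine-invariant distance. -/
theorem stmt_17 {n : Type*} [Fintype n] [DecidableEq n] (M N : Matrix n n ℝ)
    (hM : M.PosDef) (hN : N.PosDef)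
    (P : Matrix n n ℝ)
    (hP : P = matSqrt M * matSqrt ((matSqrt M)⁻¹ * N * (matSqrt M)⁻¹) * matSqrt M) :
    P.PosDef ∧ aiDist M P = aiDist M N / 2 ∧ aiDist P N = aiDist M N / 2 := by
  classical
  set S := matSqrt M with hSdef
  have hMS : S = hM.posSemidef.sqrt := by rw [hSdef, matSqrt, dif_pos hM.posSemidef]; rfl
  have hS : S.PosDef := by rw [hMS]; exact matSqrt_posDef' hM
  have hSH : S.IsHermitian := hS.1
  have hSdet : IsUnit S.det := (Matrix.isUnit_iff_isUnit_det _).mp hS.isUnit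
  have hSiS : S⁻¹ * S = 1 := Matrix.nonsing_inv_mul S hSdet
  have hSSi : S * S⁻¹ = 1 := Matrix.mul_nonsing_inv S hSdet
  set C := S⁻¹ * N * S⁻¹ with hCdef
  have hSinvH : (S⁻¹)ᴴ = S⁻¹ := hSH.inv.eq
  have hC : C.PosDef := by
    have h := posDef_conj_aux hN ((Matrix.isUnit_iff_isUnit_det _).mp hS.inv.isUnit)
    rwa [hSinvH] at h
  set Q := matSqrt C with hQdef
  have hQps : Q = hC.posSemidef.sqrt := by rw [hQdef, matSqrt, dif_pos hC.posSemidef]; rfl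
  have hQ : Q.PosDef := by rw [hQps]; exact matSqrt_posDef' hC
  have hQH : Q.IsHermitian := hQ.1
  have hQQ : Q * Q = C := by rw [hQps]; exact hC.posSemidef.sqrt_mul_self
  have hP' : P = S * Q * S := hP
  have hPposd : P.PosDef := by
    rw [hP']
    have h := posDef_conj_aux hQ hSdet
    rwa [hSH.eq] at h
  -- second component
  have hMP : aiDist M P = frobNorm (matLog Q) := by
    have hmid : S⁻¹ * P * S⁻¹ = Q := by
      rw [hP']
      calc S⁻¹ * (S * Q * S) * S⁻¹ = (S⁻¹ * S) * (Q * (S * S⁻¹)) := by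
            simp only [Matrix.mul_assoc]
      _ = Q := by rw [hSiS, hSSi, Matrix.one_mul, Matrix.mul_one]
    unfold aiDist
    rw [← hSdef, hmid]
  have hMN : aiDist M N = frobNorm (matLog C) := by
    unfold aiDist
    rw [← hSdef, ← hCdef]
  have hlog : matLog C = (2:ℝ) • matLog Q := by
    rw [hQdef, matLog_matSqrt hC, smul_smul]
    norm_num
  have comp2 : aiDist M P = aiDist M N / 2 := by
    rw [hMP, hMN, hlog, frobNorm_two_smul]
    ring
  -- third component
  set T := matSqrt P with hTdef
  have hTps : T = hPposd.posSemidef.sqrt := by rw [hTdef, matSqrt, dif_pos hPposd.posSemidef]; rfl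
  have hT : T.PosDef := by rw [hTps]; exact matSqrt_posDef' hPposd
  have hTdet : IsUnit T.det := (Matrix.isUnit_iff_isUnit_det _).mp hT.isUnit
  have hTT : T * T = P := by rw [hTps]; exact hPposd.posSemidef.sqrt_mul_self
  have hGu : IsUnit (T⁻¹ * S) := hT.inv.isUnit.mul hS.isUnit
  set u := hGu.unit with hudef
  have hu : (u : Matrix n n ℝ) = T⁻¹ * S := hGu.unit_spec
  have hui : (↑u⁻¹ : Matrix n n ℝ) = S⁻¹ * T := by
    rw [Matrix.coe_units_inv, hu, Matrix.mul_inv_rev, Matrix.nonsing_inv_nonsing_inv T hTdet]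
  have hNform : S * (Q * (Q * S)) = N := by
    have h0 : S * C * S = N := by
      rw [hCdef]
      calc S * (S⁻¹ * N * S⁻¹) * S = (S * S⁻¹) * (N * (S⁻¹ * S)) := by
            simp only [Matrix.mul_assoc]
      _ = N := by rw [hSSi, hSiS, Matrix.one_mul, Matrix.mul_one]
    calc S * (Q * (Q * S)) = S * (Q * Q) * S := by simp only [Matrix.mul_assoc]
    _ = N := by rw [hQQ, h0]
  have key : T⁻¹ * N * T⁻¹ = (u : Matrix n n ℝ) * Q * (↑u⁻¹ : Matrix n n ℝ) := by
    rw [hu, hui]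
    have h1 : S * Q * S⁻¹ * (T * T) = N := by
      rw [hTT, hP']
      calc S * Q * S⁻¹ * (S * Q * S) = S * (Q * (S⁻¹ * (S * (Q * S)))) := by
            simp only [Matrix.mul_assoc]
      _ = S * (Q * (Q * S)) := by rw [← Matrix.mul_assoc S⁻¹ S, hSiS, Matrix.one_mul]
      _ = N := hNform
    have h2 : S * Q * (S⁻¹ * T) = N * T⁻¹ := by
      have h3 := congrArg (fun Z => Z * T⁻¹) h1
      calc S * Q * (S⁻¹ * T) = S * Q * S⁻¹ * (T * T) * T⁻¹ := by
            simp only [Matrix.mul_assoc]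
            rw [Matrix.mul_nonsing_inv T hTdet, Matrix.mul_one]
      _ = N * T⁻¹ := h3
    calc T⁻¹ * N * T⁻¹ = T⁻¹ * (N * T⁻¹) := by rw [Matrix.mul_assoc]
    _ = T⁻¹ * (S * Q * (S⁻¹ * T)) := by rw [h2]
    _ = T⁻¹ * S * Q * (S⁻¹ * T) := by simp only [Matrix.mul_assoc]
  have hXpos : (T⁻¹ * N * T⁻¹).PosDef := by
    have h := posDef_conj_aux hN ((Matrix.isUnit_iff_isUnit_det _).mp hT.inv.isUnit)
    rwa [hT.1.inv.eq] at h
  have hXH' : ((u : Matrix n n ℝ) * Q * (↑u⁻¹ : Matrix n n ℝ)).IsHermitian := key ▸ hXpos.1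
  have hPN : aiDist P N = frobNorm (matLog Q) := by
    unfold aiDist
    rw [← hTdef, key, matLog_eq_cfc hXH', cfc_units_conj Real.log Q hQH u hXH',
      ← matLog_eq_cfc hQH]
    have hconjH : ((u : Matrix n n ℝ) * matLog Q * (↑u⁻¹ : Matrix n n ℝ)).IsHermitian := by
      rw [matLog_eq_cfc hQH, ← cfc_units_conj Real.log Q hQH u hXH']
      exact cfc_predicate _ _
    exact frobNorm_units_conj (matLog Q) (by rw [matLog_eq_cfc hQH]; exact cfc_predicate _ _)
      u hconjH
  exact ⟨hPposd, comp2, by rw [hPN, ← hMP, comp2]⟩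
end
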